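/- Let (M_b, ∼) be an arbitrage-free market with NA price π and unit zero-coupon bond prices P_t = π(δ_t), and assume: (A1) t ↦ P_t is continuous, bounded and strictly positive on [0,∞); (A2) for every γ ∈ M_b⁺ and all 0 ≤ s < t there exists b with min{P_r : r ∈ [s,t]} ≤ b ≤ max{P_r : r ∈ [s,t]} such that π(γ_{(s,t]}) = b·γ((s,t]), where γ_{(s,t]} is the restriction of γ to (s,t]. Then for every T > 0 and every γ ∈ M_b whose total variation is supported in [0,T], the NA price is π(γ) = ∫_0^∞ P_t dγ(t), the integral being ∫_0^∞ P_t dγ⁺(t) − ∫_0^∞ P_t dγ⁻(t) for the Jordan decomposition γ = γ⁺ − γ⁻. -/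

import Mathlib

open MeasureTheory
open scoped NNReal

/-- The unit zero-coupon bond with maturity `t`: the Dirac measure at `t`,
as a finite signed Borel measure on `[0,∞)` (modeled as `ℝ≥0`). -/
noncomputable def uzcb (t : ℝ≥0) : SignedMeasure ℝ≥0 :=
  (MeasureTheory.Measure.dirac t).toSignedMeasure

/-- A market of deterministic cash flows: a reflexive, symmetric, additive relation on the
finite signed Borel measures on `[0,∞)` such that every nonzero nonnegative cash flow has at
least one strictly positive spot price. -/
def IsMarket (r : SignedMeasure ℝ≥0 → SignedMeasure ℝ≥0 → Prop) : Prop :=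
  (∀ γ, r γ γ) ∧
  (∀ γ₁ γ₂, r γ₁ γ₂ → r γ₂ γ₁) ∧
  (∀ γ₁ γ₂ γ₃ γ₄, r γ₁ γ₂ → r γ₃ γ₄ → r (γ₁ + γ₃) (γ₂ + γ₄)) ∧
  (∀ γ : SignedMeasure ℝ≥0, 0 ≤ γ → γ ≠ 0 → ∃ b : ℝ, 0 < b ∧ r γ (b • uzcb 0))

/-- No-arbitrage: no nonzero nonnegative cash flow is exchangeable for the null cash flow. -/
def NoArb (r : SignedMeasure ℝ≥0 → SignedMeasure ℝ≥0 → Prop) : Prop :=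
  ¬ ∃ γ : SignedMeasure ℝ≥0, 0 ≤ γ ∧ γ ≠ 0 ∧ r 0 γ

/-- Integral of a function against a finite signed Borel measure, defined via the Jordan
decomposition γ = γ⁺ - γ⁻ as ∫ f dγ⁺ - ∫ f dγ⁻. -/
noncomputable def sInt (f : ℝ≥0 → ℝ) (γ : SignedMeasure ℝ≥0) : ℝ :=
  (∫ t, f t ∂γ.toJordanDecomposition.posPart) -
    ∫ t, f t ∂γ.toJordanDecomposition.negPart

lemma toSignedMeasure_nonneg (μ : Measure ℝ≥0) [IsFiniteMeasure μ] :
    (0 : SignedMeasure ℝ≥0) ≤ μ.toSignedMeasure := by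
  rw [MeasureTheory.VectorMeasure.le_iff]
  intro i hi
  rw [Measure.toSignedMeasure_apply_measurable hi]
  simp [ENNReal.toReal_nonneg]

lemma smul_uzcb_nonneg {c : ℝ} (hc : 0 ≤ c) (t : ℝ≥0) :
    (0 : SignedMeasure ℝ≥0) ≤ c • uzcb t := by
  rw [MeasureTheory.VectorMeasure.le_iff]
  intro i hi
  rw [VectorMeasure.smul_apply]
  have := (MeasureTheory.VectorMeasure.le_iff.mp (toSignedMeasure_nonneg (Measure.dirac t))) i hi
  simp only [VectorMeasure.zero_apply] at this ⊢
  exact mul_nonneg hc this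

lemma smul_uzcb_ne_zero {c : ℝ} (hc : c ≠ 0) (t : ℝ≥0) : c • uzcb t ≠ 0 := by
  intro h
  have := congrArg (fun v : SignedMeasure ℝ≥0 => v Set.univ) h
  rw [VectorMeasure.smul_apply, VectorMeasure.zero_apply, uzcb,
    Measure.toSignedMeasure_apply_measurable MeasurableSet.univ] at this
  simp at this
  exact hc this

lemma price_unique {r : SignedMeasure ℝ≥0 → SignedMeasure ℝ≥0 → Prop}
    (hM : (∀ γ, r γ γ) ∧
      (∀ γ₁ γ₂, r γ₁ γ₂ → r γ₂ γ₁) ∧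
      (∀ γ₁ γ₂ γ₃ γ₄, r γ₁ γ₂ → r γ₃ γ₄ → r (γ₁ + γ₃) (γ₂ + γ₄)) ∧ True)
    (hNA : ¬ ∃ γ : SignedMeasure ℝ≥0, 0 ≤ γ ∧ γ ≠ 0 ∧ r 0 γ)
    {γ : SignedMeasure ℝ≥0} {b c : ℝ}
    (hb : r γ (b • uzcb 0)) (hc : r γ (c • uzcb 0)) : b = c := by
  obtain ⟨hrefl, hsymm, hadd, -⟩ := hM
  have key : ∀ b c : ℝ, b < c → ¬ r (b • uzcb 0) (c • uzcb 0) := by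
    intro b c hlt hbc
    have h3 : r ((-b) • uzcb 0 + b • uzcb 0) ((-b) • uzcb 0 + c • uzcb 0) :=
      hadd _ _ _ _ (hrefl _) hbc
    have e3 : (-b) • uzcb 0 + b • uzcb 0 = (0 : SignedMeasure ℝ≥0) := by
      rw [← add_smul]; simp
    have e4 : (-b) • uzcb 0 + c • uzcb 0 = (c - b) • uzcb 0 := by
      rw [← add_smul]; ring_nf
    rw [e3, e4] at h3
    exact hNA ⟨(c - b) • uzcb 0, smul_uzcb_nonneg (by linarith) 0,
      smul_uzcb_ne_zero (ne_of_gt (by linarith)) 0, h3⟩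
  have h1 : r (b • uzcb 0 + (-γ) + γ) (γ + (-γ) + c • uzcb 0) :=
    hadd _ _ _ _ (hadd _ _ _ _ (hsymm _ _ hb) (hrefl (-γ))) hc
  have e1 : b • uzcb 0 + (-γ) + γ = b • uzcb 0 := by abel
  have e2 : γ + (-γ) + c • uzcb 0 = c • uzcb 0 := by abel
  rw [e1, e2] at h1
  rcases lt_trichotomy b c with h | h | h
  · exact absurd h1 (key _ _ h)
  · exact h
  · exact absurd (hsymm _ _ h1) (key _ _ h)

lemma toSignedMeasure_sum {ι : Type*} (s : Finset ι) (f : ι → Measure ℝ≥0)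
    [∀ i, IsFiniteMeasure (f i)] :
    (∑ i ∈ s, f i).toSignedMeasure = ∑ i ∈ s, (f i).toSignedMeasure := by
  classical
  ext A hA
  have hev : (∑ i ∈ s, (f i).toSignedMeasure) A = ∑ i ∈ s, (f i).toSignedMeasure A :=
    map_sum (⟨⟨fun v : SignedMeasure ℝ≥0 => v A, rfl⟩, fun u v => rfl⟩ :
      SignedMeasure ℝ≥0 →+ ℝ) _ s
  rw [hev, Measure.toSignedMeasure_apply_measurable hA, measureReal_def, Measure.finset_sum_apply,
    ENNReal.toReal_sum (fun i _ => measure_ne_top (f i) A)]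
  exact Finset.sum_congr rfl fun i _ => (Measure.toSignedMeasure_apply_measurable hA).symm

lemma toSignedMeasure_restrict (μ : Measure ℝ≥0) [IsFiniteMeasure μ] {s : Set ℝ≥0}
    (hs : MeasurableSet s) :
    (μ.restrict s).toSignedMeasure = μ.toSignedMeasure.restrict s := by
  ext A hA
  rw [Measure.toSignedMeasure_apply_measurable hA, VectorMeasure.restrict_apply _ hs hA,
    Measure.toSignedMeasure_apply_measurable (hA.inter hs), measureReal_restrict_apply hA]

lemma restrict_singleton_zero (μ : Measure ℝ≥0) [IsFiniteMeasure μ] :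
    (μ.restrict {0}).toSignedMeasure = (μ {0}).toReal • uzcb 0 := by
  ext A hA
  rw [Measure.toSignedMeasure_apply_measurable hA, measureReal_def, Measure.restrict_apply hA,
    VectorMeasure.smul_apply, uzcb, Measure.toSignedMeasure_apply_measurable hA, measureReal_def,
    Measure.dirac_apply' _ hA]
  by_cases h0 : (0 : ℝ≥0) ∈ A
  · rw [Set.inter_eq_right.mpr (by simpa using h0)]
    simp [Set.indicator_of_mem h0]
  · rw [Set.inter_singleton_eq_empty.mpr h0]
    simp [Set.indicator_of_notMem h0]

lemma measure_decomp (μ : Measure ℝ≥0) [IsFiniteMeasure μ] {T : ℝ≥0}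
    (hsupp : μ (Set.Ioi T) = 0) (t : ℕ → ℝ≥0) (hmono : Monotone t)
    (ht0 : t 0 = 0) (n : ℕ) (htn : t n = T) :
    μ = μ.restrict {0} + ∑ i ∈ Finset.range n, μ.restrict (Set.Ioc (t i) (t (i + 1))) := by
  classical
  have hunion : ∀ m : ℕ, ⋃ i ∈ Finset.range m, Set.Ioc (t i) (t (i+1)) = Set.Ioc (t 0) (t m) := by
    intro m
    induction m with
    | zero => simp
    | succ m ih =>
      rw [Finset.range_add_one, Finset.set_biUnion_insert, ih, Set.union_comm,
        Set.Ioc_union_Ioc_eq_Ioc (hmono (Nat.zero_le m)) (hmono (Nat.le_succ m))]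
  ext A hA
  rw [Measure.add_apply, Measure.finset_sum_apply, Measure.restrict_apply hA]
  have hres : ∀ i ∈ Finset.range n, (μ.restrict (Set.Ioc (t i) (t (i+1)))) A
      = μ (A ∩ Set.Ioc (t i) (t (i+1))) := fun i _ => Measure.restrict_apply hA
  rw [Finset.sum_congr rfl hres]
  have hd : (↑(Finset.range n) : Set ℕ).PairwiseDisjoint
      (fun i => A ∩ Set.Ioc (t i) (t (i+1))) := by
    intro i _ j _ hij
    refine Disjoint.mono Set.inter_subset_right Set.inter_subset_right ?_
    rw [Set.Ioc_disjoint_Ioc]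
    rcases hij.lt_or_gt with h | h
    · exact le_trans (min_le_left _ _) (le_trans (hmono h) (le_max_right _ _))
    · exact le_trans (min_le_right _ _) (le_trans (hmono h) (le_max_left _ _))
  rw [← measure_biUnion_finset hd
    (fun i _ => hA.inter measurableSet_Ioc)]
  have : ⋃ i ∈ Finset.range n, (A ∩ Set.Ioc (t i) (t (i+1)))
      = A ∩ Set.Ioc 0 T := by
    rw [← Set.inter_iUnion₂, hunion n, ht0, htn]
  rw [this]
  have hsplit1 : μ (A ∩ {0}) + μ (A ∩ Set.Ioc 0 T) = μ (A ∩ Set.Icc 0 T) := by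
    rw [← measure_union ?_ (hA.inter measurableSet_Ioc)]
    · rw [← Set.inter_union_distrib_left]
      congr 1
      rw [← Set.Icc_self, Set.Icc_union_Ioc_eq_Icc le_rfl (zero_le : (0:ℝ≥0) ≤ T)]
    · refine Disjoint.mono Set.inter_subset_right Set.inter_subset_right ?_
      rw [Set.disjoint_left]
      rintro x rfl hx
      exact absurd hx.1 (lt_irrefl _)
  rw [hsplit1]
  have hcov : μ A = μ (A ∩ Set.Icc 0 T) + μ (A ∩ Set.Ioi T) := by
    rw [← measure_union ?_ (hA.inter measurableSet_Ioi)]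
    · rw [← Set.inter_union_distrib_left, Set.Icc_union_Ioi_eq_Ici (zero_le : (0:ℝ≥0) ≤ T)]
      congr 1
      exact (Set.inter_eq_left.mpr fun x _ => (zero_le : (0:ℝ≥0) ≤ x)).symm
    · refine Disjoint.mono Set.inter_subset_right Set.inter_subset_right ?_
      rw [Set.disjoint_left]
      exact fun x hx hx' => absurd hx.2 (not_le.mpr hx')
  rw [hcov, measure_mono_null Set.inter_subset_right hsupp, add_zero]

section Price

variable {r : SignedMeasure ℝ≥0 → SignedMeasure ℝ≥0 → Prop} {π : SignedMeasure ℝ≥0 → ℝ}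

lemma price_eq (hM : IsMarket r) (hNA : NoArb r) (hπ : ∀ γ, r γ (π γ • uzcb 0))
    {γ : SignedMeasure ℝ≥0} {c : ℝ} (h : r γ (c • uzcb 0)) : π γ = c :=
  price_unique ⟨hM.1, hM.2.1, hM.2.2.1, trivial⟩ hNA (hπ γ) h

lemma price_smul (hM : IsMarket r) (hNA : NoArb r) (hπ : ∀ γ, r γ (π γ • uzcb 0))
    (c : ℝ) : π (c • uzcb 0) = c :=
  price_eq hM hNA hπ (hM.1 _)

lemma price_zero (hM : IsMarket r) (hNA : NoArb r) (hπ : ∀ γ, r γ (π γ • uzcb 0)) :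
    π 0 = 0 := by
  have h : r 0 ((0 : ℝ) • uzcb 0) := by rw [zero_smul]; exact hM.1 0
  exact price_eq hM hNA hπ h

lemma price_add (hM : IsMarket r) (hNA : NoArb r) (hπ : ∀ γ, r γ (π γ • uzcb 0))
    (γ₁ γ₂ : SignedMeasure ℝ≥0) : π (γ₁ + γ₂) = π γ₁ + π γ₂ := by
  have h : r (γ₁ + γ₂) ((π γ₁ + π γ₂) • uzcb 0) := by
    rw [add_smul]; exact hM.2.2.1 _ _ _ _ (hπ γ₁) (hπ γ₂)
  exact price_eq hM hNA hπ h

lemma price_sum (hM : IsMarket r) (hNA : NoArb r) (hπ : ∀ γ, r γ (π γ • uzcb 0))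
    {ι : Type*} (s : Finset ι) (ξ : ι → SignedMeasure ℝ≥0) :
    π (∑ i ∈ s, ξ i) = ∑ i ∈ s, π (ξ i) := by
  classical
  induction s using Finset.induction_on with
  | empty => simpa using price_zero hM hNA hπ
  | insert _ _ hx ih =>
    rw [Finset.sum_insert hx, Finset.sum_insert hx, price_add hM hNA hπ, ih]

end Price

lemma toSignedMeasure_congr {μ ν : Measure ℝ≥0} [IsFiniteMeasure μ] [IsFiniteMeasure ν]
    (h : μ = ν) : μ.toSignedMeasure = ν.toSignedMeasure := by
  subst h; rfl

lemma price_measure {r : SignedMeasure ℝ≥0 → SignedMeasure ℝ≥0 → Prop}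
    {π : SignedMeasure ℝ≥0 → ℝ}
    (hM : IsMarket r) (hNA : NoArb r) (hπ : ∀ γ, r γ (π γ • uzcb 0))
    (P : ℝ≥0 → ℝ) (hPcont : Continuous P) (hPbdd : ∃ M : ℝ, ∀ t, P t ≤ M)
    (hPpos : ∀ t, 0 < P t) (hP0 : P 0 = 1)
    (havg : ∀ γ : SignedMeasure ℝ≥0, 0 ≤ γ → ∀ s t : ℝ≥0, s < t →
      ∃ b : ℝ, sInf (P '' Set.Icc s t) ≤ b ∧ b ≤ sSup (P '' Set.Icc s t) ∧
        π (γ.restrict (Set.Ioc s t)) = b * γ (Set.Ioc s t))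
    (T : ℝ≥0) (hT : 0 < T) (μ : Measure ℝ≥0) [IsFiniteMeasure μ]
    (hsupp : μ (Set.Ioi T) = 0) :
    π μ.toSignedMeasure = ∫ x, P x ∂μ := by
  classical
  have hPint : Integrable P μ := by
    obtain ⟨M, hMb⟩ := hPbdd
    exact (integrable_const M).mono' hPcont.aestronglyMeasurable
      (Filter.Eventually.of_forall fun x => by
        rw [Real.norm_eq_abs, abs_of_pos (hPpos x)]; exact hMb x)
  have ξnn : 0 ≤ μ.toSignedMeasure := toSignedMeasure_nonneg μ
  suffices key : ∀ ε : ℝ, 0 < ε →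
      |π μ.toSignedMeasure - ∫ x, P x ∂μ| ≤ ε * ((μ Set.univ).toReal + 1) by
    by_contra hne
    set d := |π μ.toSignedMeasure - ∫ x, P x ∂μ| with hd
    have h1 : 0 < d := abs_pos.mpr (sub_ne_zero.mpr hne)
    set C := (μ Set.univ).toReal + 1 with hC
    have hCpos : 0 < C := by positivity
    have := key (d / (2 * C)) (by positivity)
    rw [div_mul_eq_mul_div, mul_comm] at this
    have : d ≤ d / 2 := by
      calc d ≤ C * d / (2 * C) := this
      _ = d / 2 := by field_simp
    linarith
  intro ε hε
  obtain ⟨δ, hδ, huc⟩ := Metric.uniformContinuousOn_iff_le.1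
    ((isCompact_Icc (a := (0 : ℝ≥0)) (b := T)).uniformContinuousOn_of_continuous
      hPcont.continuousOn) ε hε
  have hT' : (0 : ℝ) < (T : ℝ) := hT
  obtain ⟨n, hn⟩ := exists_nat_gt ((T : ℝ) / δ)
  have hn0 : 0 < n := by
    rcases Nat.eq_zero_or_pos n with rfl | h
    · exfalso
      have h1 : (0 : ℝ) < (T : ℝ) / δ := by positivity
      push_cast at hn
      linarith
    · exact h
  have hn0' : (0 : ℝ) < (n : ℝ) := by exact_mod_cast hn0
  have hTn : (T : ℝ) / n ≤ δ := by
    rw [div_le_iff₀ hn0']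
    rw [div_lt_iff₀ hδ] at hn
    nlinarith
  set t : ℕ → ℝ≥0 := fun i => (i : ℝ≥0) * T / (n : ℝ≥0) with htdef
  have htc : ∀ i : ℕ, ((t i : ℝ≥0) : ℝ) = (i : ℝ) * (T : ℝ) / (n : ℝ) := by
    intro i; simp [htdef, NNReal.coe_div, NNReal.coe_mul]
  have hmono : Monotone t := by
    intro a b hab
    rw [← NNReal.coe_le_coe, htc, htc]
    gcongr
  have ht0 : t 0 = 0 := by simp [htdef]
  have htn' : t n = T := by
    apply NNReal.coe_injective
    rw [htc]
    field_simp
  have htlt : ∀ i : ℕ, t i < t (i + 1) := by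
    intro i
    rw [← NNReal.coe_lt_coe, htc, htc]
    rw [div_lt_div_iff₀ hn0' hn0']
    push_cast
    nlinarith [hT', hn0']
  have htT : ∀ i : ℕ, i ≤ n → (t i : ℝ) ≤ (T : ℝ) := by
    intro i hi
    rw [htc, div_le_iff₀ hn0']
    have : (i : ℝ) ≤ (n : ℝ) := by exact_mod_cast hi
    nlinarith
  have hbex : ∀ i : ℕ, ∃ b : ℝ, sInf (P '' Set.Icc (t i) (t (i + 1))) ≤ b ∧
      b ≤ sSup (P '' Set.Icc (t i) (t (i + 1))) ∧
      π (μ.toSignedMeasure.restrict (Set.Ioc (t i) (t (i + 1)))) =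
        b * μ.toSignedMeasure (Set.Ioc (t i) (t (i + 1))) :=
    fun i => havg _ ξnn _ _ (htlt i)
  choose b hb1 hb2 hb3 using hbex
  have hdec := measure_decomp μ hsupp t hmono ht0 n htn'
  haveI hfin : IsFiniteMeasure
      (∑ i ∈ Finset.range n, μ.restrict (Set.Ioc (t i) (t (i + 1)))) := by
    constructor
    rw [Measure.finset_sum_apply]
    exact ENNReal.sum_lt_top.mpr fun i _ => measure_lt_top _ _
  -- price side
  have hπξ : π μ.toSignedMeasure = (μ {0}).toReal +
      ∑ i ∈ Finset.range n, b i * (μ (Set.Ioc (t i) (t (i + 1)))).toReal := by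
    rw [toSignedMeasure_congr hdec, Measure.toSignedMeasure_add,
      toSignedMeasure_sum, price_add hM hNA hπ, price_sum hM hNA hπ,
      restrict_singleton_zero, price_smul hM hNA hπ]
    congr 1
    refine Finset.sum_congr rfl fun i _ => ?_
    rw [toSignedMeasure_restrict μ measurableSet_Ioc, hb3 i,
      Measure.toSignedMeasure_apply_measurable measurableSet_Ioc, measureReal_def]
  -- integral side
  have hint : ∫ x, P x ∂μ = (μ {0}).toReal +
      ∑ i ∈ Finset.range n, ∫ x in Set.Ioc (t i) (t (i + 1)), P x ∂μ := by
    conv_lhs => rw [hdec]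
    rw [integral_add_measure hPint.restrict
      (integrable_finset_sum_measure.mpr fun i _ => hPint.restrict),
      integral_finset_sum_measure fun i _ => hPint.restrict]
    congr 1
    rw [setIntegral_congr_fun (measurableSet_singleton 0)
      (g := fun _ => P 0) (fun x hx => by rw [Set.mem_singleton_iff] at hx; rw [hx]),
      setIntegral_const, hP0, smul_eq_mul, mul_one, measureReal_def]
  -- termwise estimate
  have hterm : ∀ i ∈ Finset.range n,
      |b i * (μ (Set.Ioc (t i) (t (i + 1)))).toReal -
        ∫ x in Set.Ioc (t i) (t (i + 1)), P x ∂μ| ≤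
      ε * (μ (Set.Ioc (t i) (t (i + 1)))).toReal := by
    intro i hi
    have hi' : i + 1 ≤ n := Finset.mem_range.mp hi
    set s := Set.Icc (t i) (t (i + 1)) with hs
    have hsub : s ⊆ Set.Icc 0 T := Set.Icc_subset_Icc zero_le
      (by rw [← NNReal.coe_le_coe]; exact htT _ hi')
    have hcomp : IsCompact (P '' s) := isCompact_Icc.image hPcont
    have hne : (P '' s).Nonempty := ⟨P (t i), ⟨t i, ⟨le_rfl, (htlt i).le⟩, rfl⟩⟩
    obtain ⟨y, hy, hysup⟩ := hcomp.sSup_mem hne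
    obtain ⟨z, hz, hzinf⟩ := hcomp.sInf_mem hne
    have hdistyz : dist y z ≤ δ := by
      rw [NNReal.dist_eq]
      have h1 : (t i : ℝ) ≤ (y : ℝ) ∧ (y : ℝ) ≤ (t (i + 1) : ℝ) :=
        ⟨NNReal.coe_le_coe.mpr hy.1, NNReal.coe_le_coe.mpr hy.2⟩
      have h2 : (t i : ℝ) ≤ (z : ℝ) ∧ (z : ℝ) ≤ (t (i + 1) : ℝ) :=
        ⟨NNReal.coe_le_coe.mpr hz.1, NNReal.coe_le_coe.mpr hz.2⟩
      have hlen : (t (i + 1) : ℝ) - (t i : ℝ) = (T : ℝ) / n := by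
        rw [htc, htc]; push_cast; ring
      rw [abs_le]
      constructor <;> [skip; skip] <;> nlinarith [hTn, hδ.le]
    have hosc : sSup (P '' s) - sInf (P '' s) ≤ ε := by
      rw [← hysup, ← hzinf]
      have h := huc y (hsub hy) z (hsub hz) hdistyz
      rw [Real.dist_eq] at h
      exact (le_abs_self _).trans h
    have hbd : ∀ x ∈ Set.Ioc (t i) (t (i + 1)), ‖b i - P x‖ ≤ ε := by
      intro x hx
      have hxs : x ∈ s := ⟨hx.1.le, hx.2⟩
      have h1 : sInf (P '' s) ≤ P x := csInf_le hcomp.bddBelow ⟨x, hxs, rfl⟩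
      have h2 : P x ≤ sSup (P '' s) := le_csSup hcomp.bddAbove ⟨x, hxs, rfl⟩
      have h3 := hb1 i
      have h4 := hb2 i
      rw [Real.norm_eq_abs, abs_le]
      constructor <;> linarith
    have hconst : b i * (μ (Set.Ioc (t i) (t (i + 1)))).toReal =
        ∫ _ in Set.Ioc (t i) (t (i + 1)), b i ∂μ := by
      rw [setIntegral_const, smul_eq_mul, measureReal_def]; ring
    rw [hconst, ← integral_sub (integrable_const _) hPint.restrict]
    calc |∫ x in Set.Ioc (t i) (t (i + 1)), (b i - P x) ∂μ|
        = ‖∫ x in Set.Ioc (t i) (t (i + 1)), (b i - P x) ∂μ‖ := (Real.norm_eq_abs _).symm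
      _ ≤ ε * (μ (Set.Ioc (t i) (t (i + 1)))).toReal :=
        norm_setIntegral_le_of_norm_le_const (measure_lt_top _ _) hbd
  -- sum of measures bound
  have hd' : (↑(Finset.range n) : Set ℕ).PairwiseDisjoint
      (fun i => Set.Ioc (t i) (t (i + 1))) := by
    intro i _ j _ hij
    rw [Function.onFun, Set.Ioc_disjoint_Ioc]
    rcases hij.lt_or_gt with h | h
    · exact le_trans (min_le_left _ _) (le_trans (hmono h) (le_max_right _ _))
    · exact le_trans (min_le_right _ _) (le_trans (hmono h) (le_max_left _ _))
  have hsum_le : ∑ i ∈ Finset.range n, (μ (Set.Ioc (t i) (t (i + 1)))).toReal ≤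
      (μ Set.univ).toReal := by
    rw [← ENNReal.toReal_sum fun i _ => measure_ne_top _ _]
    refine ENNReal.toReal_mono (measure_ne_top _ _) ?_
    rw [← measure_biUnion_finset hd' fun i _ => measurableSet_Ioc]
    exact measure_mono (Set.subset_univ _)
  -- assemble
  rw [hπξ, hint]
  have : ((μ {0}).toReal + ∑ i ∈ Finset.range n, b i * (μ (Set.Ioc (t i) (t (i + 1)))).toReal) -
      ((μ {0}).toReal + ∑ i ∈ Finset.range n, ∫ x in Set.Ioc (t i) (t (i + 1)), P x ∂μ) =
      ∑ i ∈ Finset.range n, (b i * (μ (Set.Ioc (t i) (t (i + 1)))).toReal -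
        ∫ x in Set.Ioc (t i) (t (i + 1)), P x ∂μ) := by
    rw [Finset.sum_sub_distrib]; ring
  rw [this]
  calc |∑ i ∈ Finset.range n, (b i * (μ (Set.Ioc (t i) (t (i + 1)))).toReal -
        ∫ x in Set.Ioc (t i) (t (i + 1)), P x ∂μ)|
      ≤ ∑ i ∈ Finset.range n, |b i * (μ (Set.Ioc (t i) (t (i + 1)))).toReal -
        ∫ x in Set.Ioc (t i) (t (i + 1)), P x ∂μ| := Finset.abs_sum_le_sum_abs _ _
    _ ≤ ∑ i ∈ Finset.range n, ε * (μ (Set.Ioc (t i) (t (i + 1)))).toReal :=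
        Finset.sum_le_sum hterm
    _ = ε * ∑ i ∈ Finset.range n, (μ (Set.Ioc (t i) (t (i + 1)))).toReal := by
        rw [Finset.mul_sum]
    _ ≤ ε * ((μ Set.univ).toReal + 1) := by
        have h0 : (0:ℝ) ≤ ∑ i ∈ Finset.range n, (μ (Set.Ioc (t i) (t (i + 1)))).toReal :=
          Finset.sum_nonneg fun i _ => ENNReal.toReal_nonneg
        nlinarith [hsum_le]

theorem choquet_time_bounded' (r : SignedMeasure ℝ≥0 → SignedMeasure ℝ≥0 → Prop)
    (hM : IsMarket r) (hNA : NoArb r)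
    (π : SignedMeasure ℝ≥0 → ℝ)
    (hπ : ∀ γ : SignedMeasure ℝ≥0, r γ (π γ • uzcb 0))
    (P : ℝ≥0 → ℝ) (hP : ∀ t, P t = π (uzcb t))
    (hPcont : Continuous P) (hPbdd : ∃ M : ℝ, ∀ t, P t ≤ M) (hPpos : ∀ t, 0 < P t)
    (havg : ∀ γ : SignedMeasure ℝ≥0, 0 ≤ γ → ∀ s t : ℝ≥0, s < t →
      ∃ b : ℝ, sInf (P '' Set.Icc s t) ≤ b ∧ b ≤ sSup (P '' Set.Icc s t) ∧
        π (γ.restrict (Set.Ioc s t)) = b * γ (Set.Ioc s t)) :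
    ∀ T : ℝ≥0, 0 < T → ∀ γ : SignedMeasure ℝ≥0,
      γ.toJordanDecomposition.posPart (Set.Ioi T) = 0 →
      γ.toJordanDecomposition.negPart (Set.Ioi T) = 0 →
      π γ = (∫ t, P t ∂γ.toJordanDecomposition.posPart) -
        ∫ t, P t ∂γ.toJordanDecomposition.negPart := by
  intro T hT γ hpos hneg
  have hP0 : P 0 = 1 := by
    rw [hP 0]
    have := price_smul hM hNA hπ 1
    rwa [one_smul] at this
  set j := γ.toJordanDecomposition with hj
  have h1 := price_measure hM hNA hπ P hPcont hPbdd hPpos hP0 havg T hT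
    j.posPart hpos
  have h2 := price_measure hM hNA hπ P hPcont hPbdd hPpos hP0 havg T hT
    j.negPart hneg
  have hγ' : γ = j.posPart.toSignedMeasure - j.negPart.toSignedMeasure := by
    conv_lhs => rw [← γ.toSignedMeasure_toJordanDecomposition]
    exact rfl
  have hadd' := price_add hM hNA hπ γ j.negPart.toSignedMeasure
  rw [hγ', sub_add_cancel] at hadd'
  rw [hγ']
  rw [h1, h2] at hadd'
  linarith

/-- Choquet formula for time-bounded cash flows. Under NA, continuity /
boundedness / strict positivity of the UZCB prices (A1) and the average value requirement
(A2), every cash flow whose total variation is supported in [0,T] has NA price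
∫₀^∞ P_t dγ(t). -/
theorem choquet_time_bounded (r : SignedMeasure ℝ≥0 → SignedMeasure ℝ≥0 → Prop)
    (hM : IsMarket r) (hNA : NoArb r)
    (π : SignedMeasure ℝ≥0 → ℝ)
    (hπ : ∀ γ : SignedMeasure ℝ≥0, r γ (π γ • uzcb 0))
    (P : ℝ≥0 → ℝ) (hP : ∀ t, P t = π (uzcb t))
    (hPcont : Continuous P) (hPbdd : ∃ M : ℝ, ∀ t, P t ≤ M) (hPpos : ∀ t, 0 < P t)
    (havg : ∀ γ : SignedMeasure ℝ≥0, 0 ≤ γ → ∀ s t : ℝ≥0, s < t →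
      ∃ b : ℝ, sInf (P '' Set.Icc s t) ≤ b ∧ b ≤ sSup (P '' Set.Icc s t) ∧
        π (γ.restrict (Set.Ioc s t)) = b * γ (Set.Ioc s t)) :
    ∀ T : ℝ≥0, 0 < T → ∀ γ : SignedMeasure ℝ≥0,
      γ.toJordanDecomposition.posPart (Set.Ioi T) = 0 →
      γ.toJordanDecomposition.negPart (Set.Ioi T) = 0 →
      π γ = sInt P γ := by
  intro T hT γ hpos hneg
  rw [sInt]
  exact choquet_time_bounded' r hM hNA π hπ P hP hPcont hPbdd hPpos havg T hT γ hpos hneg
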